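/- Let Q be a nonconstant polynomial with integer coefficients. Then the set of primes p such that p divides Q(n) for some positive integer n with Q(n) ≠ 0 is infinite. -/
import Mathlib

open Polynomial

lemma eval_bounded_finite (Q : Polynomial ℤ) (hQ : 1 ≤ Q.degree) (B : ℤ) :
    {x : ℤ | |Q.eval x| ≤ B}.Finite := by
  have h : {x : ℤ | |Q.eval x| ≤ B} ⊆ ⋃ v ∈ Set.Icc (-B) B, {x : ℤ | Q.eval x = v} := by
    intro x hx
    simp only [Set.mem_iUnion, Set.mem_setOf_eq]
    exact ⟨Q.eval x, ⟨neg_le_of_abs_le hx, le_of_abs_le hx⟩, rfl⟩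
  refine Set.Finite.subset (Set.Finite.biUnion (Set.finite_Icc _ _) fun v _ => ?_) h
  have hne : Q - C v ≠ 0 := fun h0 => by
    have : (Q - C v).degree = Q.degree := by
      apply Polynomial.degree_sub_C
      exact lt_of_lt_of_le zero_lt_one hQ
    rw [h0, Polynomial.degree_zero] at this
    exact absurd (this ▸ hQ) (by simp)
  have := Polynomial.finite_setOf_isRoot hne
  refine this.subset fun x hx => ?_
  simp only [Set.mem_setOf_eq, IsRoot, eval_sub, eval_C] at *
  omega

theorem gotchev (Q : Polynomial ℤ) (hQ : 1 ≤ Q.degree) :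
    {p : ℕ | p.Prime ∧ ∃ n : ℕ, 0 < n ∧ Q.eval (n : ℤ) ≠ 0 ∧
      (p : ℤ) ∣ Q.eval (n : ℤ)}.Infinite := by
  by_contra hfin
  rw [Set.not_infinite] at hfin
  set S := hfin.toFinset with hSdef
  set P : ℕ := ∏ p ∈ S, p with hP
  have hPpos : 0 < P := Finset.prod_pos fun p hp => by
    have := (hfin.mem_toFinset.mp hp).1
    exact this.pos
  -- find n0 > 0 with Q(n0) ≠ 0
  have hQne : Q ≠ 0 := fun h => by simp [h] at hQ
  have hroots : {n : ℕ | Q.eval (n : ℤ) = 0}.Finite := by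
    have := Polynomial.finite_setOf_isRoot hQne
    exact Set.Finite.preimage (fun a _ b _ h => by exact_mod_cast h) this
  obtain ⟨n0, hn0mem, hn0pos⟩ := hroots.infinite_compl.exists_gt 0
  have hc : Q.eval (n0 : ℤ) ≠ 0 := hn0mem
  set c : ℤ := Q.eval (n0 : ℤ) with hcdef
  -- the arithmetic progression n0 + |c| * P * (t+1)
  have hprog : (Set.range fun t : ℕ => ((n0 : ℤ) + |c| * P * (t + 1))).Infinite := by
    apply Set.infinite_range_of_injective
    intro a b hab
    simp only at hab
    have hcpos : 0 < |c| := abs_pos.mpr hc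
    have hPz : (0:ℤ) < (P:ℤ) := by exact_mod_cast hPpos
    have h2 : |c| * (P:ℤ) * ((a:ℤ) + 1) = |c| * P * ((b:ℤ) + 1) := by linarith
    have h3 : (a:ℤ) + 1 = (b:ℤ) + 1 := by
      exact mul_left_cancel₀ (by positivity) h2
    exact_mod_cast (by linarith : (a:ℤ) = b)
  obtain ⟨x, hxmem, hxabs⟩ : ∃ x, x ∈ Set.range (fun t : ℕ => ((n0 : ℤ) + |c| * P * (t + 1)))
      ∧ ¬ |Q.eval x| ≤ |c| := by
    by_contra hcon
    push_neg at hcon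
    exact hprog (Set.Finite.subset (eval_bounded_finite Q hQ |c|) hcon)
  obtain ⟨t, ht⟩ := hxmem
  push_neg at hxabs
  -- c divides Q(x)
  have hdvd1 : (x - (n0 : ℤ)) ∣ Q.eval x - c := Polynomial.sub_dvd_eval_sub x n0 Q
  have hxn0 : x - (n0 : ℤ) = |c| * P * (t + 1) := by rw [← ht]; ring
  obtain ⟨k, hk⟩ := hdvd1
  rw [hxn0] at hk
  have hcabs : |c| = c ∨ |c| = -c := abs_choice c
  -- Q.eval x = c * w with w = 1 ± P*(t+1)*k
  obtain ⟨w, hw, hwP⟩ : ∃ w : ℤ, Q.eval x = c * w ∧ (P : ℤ) ∣ w - 1 := by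
    rcases hcabs with h | h
    · exact ⟨1 + P * (t+1) * k, by rw [h] at hk; linarith [hk], ⟨(t+1)*k, by ring⟩⟩
    · exact ⟨1 - P * (t+1) * k, by rw [h] at hk; linarith [hk], ⟨-((t+1)*k), by ring⟩⟩
  have hwabs : 1 < |w| := by
    have h1 : |Q.eval x| = |c| * |w| := by rw [hw, abs_mul]
    have hcpos : 0 < |c| := abs_pos.mpr hc
    nlinarith
  have hwna : w.natAbs ≠ 1 := by
    have : (1:ℤ) < w.natAbs := by rwa [Int.abs_eq_natAbs] at hwabs
    omega
  obtain ⟨q, hq, hqw⟩ := Int.exists_prime_and_dvd hwna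
  have hqnat : q.natAbs.Prime := Int.prime_iff_natAbs_prime.mp hq
  have hxpos : (0 : ℤ) < x := by
    rw [← ht]; simp only
    have h1 : (0:ℤ) < |c| := abs_pos.mpr hc
    have hPz : (0:ℤ) < (P:ℤ) := by exact_mod_cast hPpos
    have h2 : (0:ℤ) ≤ (n0:ℤ) := Int.natCast_nonneg n0
    have h3 : (0:ℤ) < |c| * (P:ℤ) * ((t:ℤ) + 1) := by positivity
    linarith
  have hQx : Q.eval x ≠ 0 := by
    intro h0; rw [h0] at hxabs; simp at hxabs
    exact absurd hxabs (not_lt.mpr (abs_nonneg c))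
  -- q.natAbs is in S
  have hqS : q.natAbs ∈ S := by
    rw [hSdef, hfin.mem_toFinset]
    refine ⟨hqnat, x.toNat, ?_, ?_, ?_⟩
    · omega
    · rwa [Int.toNat_of_nonneg hxpos.le]
    · rw [Int.toNat_of_nonneg hxpos.le]
      have : (q.natAbs : ℤ) ∣ w := (Int.natAbs_dvd).mpr hqw
      exact this.trans ⟨c, by rw [hw]; ring⟩
  have hqP : (q.natAbs : ℤ) ∣ (P : ℤ) := by
    exact_mod_cast Finset.dvd_prod_of_mem _ hqS
  have : (q.natAbs : ℤ) ∣ 1 := by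
    have h1 : (q.natAbs : ℤ) ∣ w - 1 := hqP.trans hwP
    have h2 : (q.natAbs : ℤ) ∣ w := (Int.natAbs_dvd).mpr hqw
    simpa using dvd_sub h2 h1
  exact absurd (Int.eq_one_of_dvd_one (by positivity) this) (by
    have := hqnat.one_lt; omega)
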